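/- The set of rational streams over a field k is closed under addition, convolution product, and convolution inverse (of streams with nonzero initial value), and contains all polynomial streams; hence it forms a subring of the ring of streams. -/

import Mathlib

def conv {A : Type*} [Semiring A] (σ τ : ℕ → A) : ℕ → A :=
  fun n => ∑ i ∈ Finset.range (n + 1), σ i * τ (n - i)

def cst {A : Type*} [Semiring A] (a : A) : ℕ → A :=
  fun n => if n = 0 then a else 0

def Xs {A : Type*} [Semiring A] : ℕ → A :=
  fun n => if n = 1 then 1 else 0

def tl {A : Type*} (σ : ℕ → A) : ℕ → A :=
  fun n => σ (n + 1)

def IsRat {k : Type*} [Field k] (σ : ℕ → k) : Prop :=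
  ∃ ρ τ : ℕ → k, (Function.support ρ).Finite ∧ (Function.support τ).Finite ∧
    τ 0 ≠ 0 ∧ conv σ τ = ρ

namespace StreamAux

open PowerSeries

variable {k : Type*} [Field k]

lemma mk_inj : Function.Injective (PowerSeries.mk : (ℕ → k) → PowerSeries k) := by
  intro f g h
  funext n
  have := congrArg (PowerSeries.coeff n) h
  simpa using this

lemma mk_conv (σ τ : ℕ → k) :
    PowerSeries.mk (conv σ τ) = PowerSeries.mk σ * PowerSeries.mk τ := by
  ext n
  simp [PowerSeries.coeff_mul, conv,
    Finset.Nat.sum_antidiagonal_eq_sum_range_succ_mk]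

lemma mk_add (σ τ : ℕ → k) :
    PowerSeries.mk (σ + τ) = PowerSeries.mk σ + PowerSeries.mk τ := by
  ext n; simp

lemma mk_cst_one : PowerSeries.mk (cst 1 : ℕ → k) = 1 := by
  ext n
  simp [cst, PowerSeries.coeff_one]

lemma conv_eq_iff (σ τ ρ : ℕ → k) :
    conv σ τ = ρ ↔ PowerSeries.mk σ * PowerSeries.mk τ = PowerSeries.mk ρ := by
  rw [← mk_conv]
  exact ⟨fun h => by rw [h], fun h => mk_inj h⟩

lemma bound_of_finite {σ : ℕ → k} (h : (Function.support σ).Finite) :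
    ∃ N, ∀ n, N < n → σ n = 0 := by
  obtain ⟨N, hN⟩ := h.bddAbove
  refine ⟨N, fun n hn => ?_⟩
  by_contra h0
  exact absurd (hN (by simpa [Function.mem_support] using h0)) (by omega)

lemma conv_support_finite {σ τ : ℕ → k} (hσ : (Function.support σ).Finite)
    (hτ : (Function.support τ).Finite) : (Function.support (conv σ τ)).Finite := by
  obtain ⟨N, hN⟩ := bound_of_finite hσ
  obtain ⟨M, hM⟩ := bound_of_finite hτ
  apply Set.Finite.subset (Set.finite_Iic (N + M))
  intro n hn
  simp only [Set.mem_Iic]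
  by_contra hc
  push_neg at hc
  apply hn
  show conv σ τ n = 0
  unfold conv
  apply Finset.sum_eq_zero
  intro i hi
  simp only [Finset.mem_range] at hi
  rcases le_or_gt i N with h | h
  · rw [hM (n - i) (by omega), mul_zero]
  · rw [hN i h, zero_mul]

lemma add_support_finite {σ τ : ℕ → k} (hσ : (Function.support σ).Finite)
    (hτ : (Function.support τ).Finite) : (Function.support (σ + τ)).Finite :=
  (hσ.union hτ).subset (Function.support_add σ τ)

lemma conv_zero (σ τ : ℕ → k) : conv σ τ 0 = σ 0 * τ 0 := by
  simp [conv]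

end StreamAux

open StreamAux in
theorem stmt18 {k : Type*} [Field k] :
    (∀ σ τ : ℕ → k, IsRat σ → IsRat τ → IsRat (σ + τ)) ∧
    (∀ σ τ : ℕ → k, IsRat σ → IsRat τ → IsRat (conv σ τ)) ∧
    (∀ σ ρ : ℕ → k, IsRat σ → σ 0 ≠ 0 → conv ρ σ = cst 1 → IsRat ρ) ∧
    (∀ π : ℕ → k, (Function.support π).Finite → IsRat π) := by
  refine ⟨?_, ?_, ?_, ?_⟩
  · rintro σ τ ⟨ρ1, τ1, hρ1, hτ1, h01, he1⟩ ⟨ρ2, τ2, hρ2, hτ2, h02, he2⟩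
    refine ⟨conv ρ1 τ2 + conv ρ2 τ1, conv τ1 τ2,
      add_support_finite (conv_support_finite hρ1 hτ2) (conv_support_finite hρ2 hτ1),
      conv_support_finite hτ1 hτ2, ?_, ?_⟩
    · rw [conv_zero]; exact mul_ne_zero h01 h02
    · rw [conv_eq_iff] at he1 he2 ⊢
      rw [mk_add, mk_add, mk_conv, mk_conv, mk_conv]
      ring_nf
      ring_nf at he1 he2
      linear_combination PowerSeries.mk τ2 * he1 + PowerSeries.mk τ1 * he2
  · rintro σ τ ⟨ρ1, τ1, hρ1, hτ1, h01, he1⟩ ⟨ρ2, τ2, hρ2, hτ2, h02, he2⟩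
    refine ⟨conv ρ1 ρ2, conv τ1 τ2, conv_support_finite hρ1 hρ2,
      conv_support_finite hτ1 hτ2, ?_, ?_⟩
    · rw [conv_zero]; exact mul_ne_zero h01 h02
    · rw [conv_eq_iff] at he1 he2 ⊢
      rw [mk_conv, mk_conv, mk_conv]
      linear_combination PowerSeries.mk σ * PowerSeries.mk τ1 * he2 +
        PowerSeries.mk ρ2 * he1
  · rintro σ ρ ⟨π, τ, hπ, hτ, h0τ, he⟩ h0σ hinv
    refine ⟨τ, π, hτ, hπ, ?_, ?_⟩
    · have := congrFun he 0
      rw [conv_zero] at this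
      intro h
      rw [h] at this
      exact mul_ne_zero h0σ h0τ this
    · rw [conv_eq_iff] at he hinv ⊢
      rw [mk_cst_one] at hinv
      linear_combination -(PowerSeries.mk ρ * he) + PowerSeries.mk τ * hinv
  · intro π hπ
    refine ⟨π, cst 1, hπ, ?_, by simp [cst], ?_⟩
    · apply Set.Finite.subset (Set.finite_Iic 0)
      intro n hn
      simp only [Function.mem_support, cst] at hn
      simp only [Set.mem_Iic]
      by_contra h; exact hn (if_neg (by omega))
    · rw [conv_eq_iff, mk_cst_one, mul_one]
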